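/- Let F be continuous on [a,b] with least concave majorant F̂, let M = max F, and let c1 be the smallest point at which F attains M. Suppose R = [r1,r2] ⊆ [a,c1] is an interval on which F is strictly concave and increasing, and let m2 ∈ R satisfy F̂(m2) = F(m2). Let s < r1 satisfy F(s) = max{F(x) : x ∈ [a,r1]}, and suppose m1 < r1 is such that (m1,m2) is a connected component of [a,b] \ Z_F, where Z_F = {x : F̂(x) = F(x)}. Then m1 ∈ [a,s]. -/

import Mathlib

open Set

/-- The least concave majorant of `F` on `[a, b]`. -/
noncomputable def leastConcaveMajorant (a b : ℝ) (F : ℝ → ℝ) (x : ℝ) : ℝ :=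
  sInf {y : ℝ | ∃ G : ℝ → ℝ, ConcaveOn ℝ (Set.Icc a b) G ∧
    (∀ z ∈ Set.Icc a b, F z ≤ G z) ∧ y = G x}

lemma lcm_bdd (a b : ℝ) (F : ℝ → ℝ) (x : ℝ) (hx : x ∈ Set.Icc a b) :
    BddBelow {y : ℝ | ∃ G : ℝ → ℝ, ConcaveOn ℝ (Set.Icc a b) G ∧
      (∀ z ∈ Set.Icc a b, F z ≤ G z) ∧ y = G x} :=
  ⟨F x, by rintro y ⟨G, hG, hGF, rfl⟩; exact hGF x hx⟩

lemma lcm_const_mem (a b M : ℝ) (F : ℝ → ℝ) (hM : ∀ z ∈ Set.Icc a b, F z ≤ M) (x : ℝ) :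
    M ∈ {y : ℝ | ∃ G : ℝ → ℝ, ConcaveOn ℝ (Set.Icc a b) G ∧
      (∀ z ∈ Set.Icc a b, F z ≤ G z) ∧ y = G x} :=
  ⟨fun _ => M, concaveOn_const M (convex_Icc a b), hM, rfl⟩

lemma lcm_ge (a b M : ℝ) (F : ℝ → ℝ) (hM : ∀ z ∈ Set.Icc a b, F z ≤ M)
    (x : ℝ) (hx : x ∈ Set.Icc a b) :
    F x ≤ leastConcaveMajorant a b F x := by
  apply le_csInf ⟨M, lcm_const_mem a b M F hM x⟩
  rintro y ⟨G, hG, hGF, rfl⟩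
  exact hGF x hx

lemma lcm_le (a b : ℝ) (F G : ℝ → ℝ) (hG : ConcaveOn ℝ (Set.Icc a b) G)
    (hGF : ∀ z ∈ Set.Icc a b, F z ≤ G z) (x : ℝ) (hx : x ∈ Set.Icc a b) :
    leastConcaveMajorant a b F x ≤ G x :=
  csInf_le (lcm_bdd a b F x hx) ⟨G, hG, hGF, rfl⟩

lemma lcm_concave (a b M : ℝ) (F : ℝ → ℝ) (hM : ∀ z ∈ Set.Icc a b, F z ≤ M) :
    ConcaveOn ℝ (Set.Icc a b) (leastConcaveMajorant a b F) := by
  refine ⟨convex_Icc a b, ?_⟩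
  intro x hx y hy p q hp hq hpq
  apply le_csInf ⟨M, lcm_const_mem a b M F hM _⟩
  rintro z ⟨G, hG, hGF, rfl⟩
  have h1 : leastConcaveMajorant a b F x ≤ G x := lcm_le a b F G hG hGF x hx
  have h2 : leastConcaveMajorant a b F y ≤ G y := lcm_le a b F G hG hGF y hy
  calc p • leastConcaveMajorant a b F x + q • leastConcaveMajorant a b F y
      ≤ p • G x + q • G y := by
        simp only [smul_eq_mul]
        exact add_le_add (mul_le_mul_of_nonneg_left h1 hp) (mul_le_mul_of_nonneg_left h2 hq)
    _ ≤ G (p • x + q • y) := hG.2 hx hy hp hq hpq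

theorem stmt13 (a b : ℝ) (hab : a < b) (F : ℝ → ℝ)
    (hF : ContinuousOn F (Set.Icc a b))
    (Z : Set ℝ)
    (hZ : Z = {x ∈ Set.Icc a b | leastConcaveMajorant a b F x = F x})
    (M : ℝ) (hM : ∀ x ∈ Set.Icc a b, F x ≤ M)
    (c1 : ℝ) (hc1 : c1 = sInf {x ∈ Set.Icc a b | F x = M})
    (hc1mem : c1 ∈ Set.Icc a b) (hc1max : F c1 = M)
    (r1 r2 : ℝ) (hr12 : r1 < r2) (hR : Set.Icc r1 r2 ⊆ Set.Icc a c1)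
    (hconc : StrictConcaveOn ℝ (Set.Icc r1 r2) F)
    (hmono : StrictMonoOn F (Set.Icc r1 r2))
    (m2 : ℝ) (hm2R : m2 ∈ Set.Icc r1 r2)
    (hm2 : leastConcaveMajorant a b F m2 = F m2)
    (s : ℝ) (hs : s < r1)
    (hsmax : s ∈ Set.Icc a r1 ∧ ∀ x ∈ Set.Icc a r1, F x ≤ F s)
    (m1 : ℝ) (hm1 : m1 < r1) (t : ℝ) (ht : t ∈ Set.Icc a b \ Z)
    (hcomp : Set.Ioo m1 m2 = connectedComponentIn (Set.Icc a b \ Z) t) :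
    m1 ∈ Set.Icc a s := by
  set L := leastConcaveMajorant a b F with hL
  have hsub : Set.Ioo m1 m2 ⊆ Set.Icc a b \ Z := by
    rw [hcomp]; exact connectedComponentIn_subset _ _
  have htmem : t ∈ Set.Ioo m1 m2 := by
    rw [hcomp]; exact mem_connectedComponentIn ht
  have hm1t : m1 < t := htmem.1
  have htm2 : t < m2 := htmem.2
  have hm1m2 : m1 < m2 := lt_trans hm1t htm2
  -- boundedness facts
  have hr1c1 : r1 ≤ c1 := (hR ⟨le_refl r1, le_of_lt hr12⟩).2
  have har1 : a ≤ r1 := (hR ⟨le_refl r1, le_of_lt hr12⟩).1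
  have hc1b : c1 ≤ b := hc1mem.2
  -- a ≤ m1
  have ham1 : a ≤ m1 := by
    by_contra h
    push_neg at h
    set x := (m1 + min a t) / 2 with hx
    have hmin : m1 < min a t := lt_min h hm1t
    have hx1 : m1 < x := by simp only [hx]; linarith
    have hx2 : x < min a t := by simp only [hx]; linarith
    have hxmem : x ∈ Set.Ioo m1 m2 := ⟨hx1, lt_of_lt_of_le (lt_of_lt_of_le hx2 (min_le_right a t)) (le_of_lt htm2)⟩
    have := (hsub hxmem).1.1
    have : x < a := lt_of_lt_of_le hx2 (min_le_left a t)
    linarith [(hsub hxmem).1.1]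
  have hm1mem : m1 ∈ Set.Icc a b := ⟨ham1, le_trans (le_of_lt hm1) (le_trans hr1c1 hc1b)⟩
  have hm2mem : m2 ∈ Set.Icc a b := ⟨le_trans har1 hm2R.1, le_trans (hR hm2R).2 hc1b⟩
  have hsmem : s ∈ Set.Icc a b := ⟨hsmax.1.1, le_trans (le_of_lt hs) (le_trans hr1c1 hc1b)⟩
  -- m1 ∈ Z
  have hm1Z : L m1 = F m1 := by
    by_contra hne
    have hm1notZ : m1 ∉ Z := by
      rw [hZ]; rintro ⟨-, heq⟩; exact hne heq
    have hIco : Set.Ico m1 m2 ⊆ Set.Icc a b \ Z := by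
      intro x hxm
      rcases eq_or_lt_of_le hxm.1 with h | h
      · rw [← h]; exact ⟨hm1mem, hm1notZ⟩
      · exact hsub ⟨h, hxm.2⟩
    have := (isPreconnected_Ico (a := m1) (b := m2)).subset_connectedComponentIn
      (⟨le_of_lt hm1t, htm2⟩ : t ∈ Set.Ico m1 m2) hIco
    rw [← hcomp] at this
    exact lt_irrefl m1 (this ⟨le_refl m1, hm1m2⟩).1
  -- main: m1 ≤ s
  have hconcv := lcm_concave a b M F hM
  have hm1s : m1 ≤ s := by
    by_contra hsm1
    push_neg at hsm1
    -- F m2 ≤ F m1 via concavity of L at s < m1 < m2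
    have hFm2le : F m2 ≤ F m1 := by
      set p : ℝ := (m2 - m1) / (m2 - s) with hp
      set q : ℝ := (m1 - s) / (m2 - s) with hq
      have hden : (0:ℝ) < m2 - s := by linarith
      have hp0 : 0 ≤ p := div_nonneg (by linarith) (le_of_lt hden)
      have hq0 : 0 ≤ q := div_nonneg (by linarith) (le_of_lt hden)
      have hq0' : 0 < q := div_pos (by linarith) hden
      have hpq : p + q = 1 := by rw [hp, hq]; field_simp; ring
      have hcomb : p • s + q • m2 = m1 := by
        simp only [smul_eq_mul, hp, hq]; field_simp; ring
      have h := hconcv.2 hsmem hm2mem hp0 hq0 hpq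
      rw [← hL] at h
      rw [hcomb] at h
      rw [hm1Z] at h
      have hLs : F s ≤ L s := lcm_ge a b M F hM s hsmem
      have hLm2 : L m2 = F m2 := hm2
      have hFs : F m1 ≤ F s := hsmax.2 m1 ⟨ham1, le_of_lt hm1⟩
      simp only [smul_eq_mul] at h
      rw [hLm2] at h
      have h1 : p * F m1 ≤ p * L s := mul_le_mul_of_nonneg_left (hFs.trans hLs) hp0
      have e : p * F m1 + q * F m1 = F m1 := by rw [← add_mul, hpq, one_mul]
      have key : q * F m2 ≤ q * F m1 := by linarith
      exact le_of_mul_le_mul_left key hq0'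
    have hm2c1 : m2 ≤ c1 := (hR hm2R).2
    have hFm2M : F m2 < M := by
      rcases lt_or_eq_of_le (hM m2 hm2mem) with h | h
      · exact h
      · exfalso
        have : c1 ≤ m2 := by
          rw [hc1]
          exact csInf_le ⟨a, fun x hx => hx.1.1⟩ ⟨hm2mem, h⟩
        have : m2 = c1 := le_antisymm hm2c1 this
        -- then F m1 = M, so c1 ≤ m1 < r1 ≤ c1, contradiction
        have hFm1M : F m1 = M := le_antisymm (hM m1 hm1mem) (by rw [← h, ← this] at *; linarith)
        have hc1m1 : c1 ≤ m1 := by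
          rw [hc1]
          exact csInf_le ⟨a, fun x hx => hx.1.1⟩ ⟨hm1mem, hFm1M⟩
        linarith
    have hm2c1' : m2 < c1 := by
      rcases lt_or_eq_of_le hm2c1 with h | h
      · exact h
      · exfalso; rw [h, hc1max] at hFm2M; exact lt_irrefl M hFm2M
    -- concavity at m1 < m2 < c1
    set p : ℝ := (c1 - m2) / (c1 - m1) with hp
    set q : ℝ := (m2 - m1) / (c1 - m1) with hq
    have hden : (0:ℝ) < c1 - m1 := by linarith
    have hp0 : 0 ≤ p := div_nonneg (by linarith) (le_of_lt hden)
    have hq0 : 0 ≤ q := div_nonneg (by linarith) (le_of_lt hden)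
    have hq0' : 0 < q := div_pos (by linarith) hden
    have hpq : p + q = 1 := by rw [hp, hq]; field_simp; ring
    have hcomb : p • m1 + q • c1 = m2 := by
      simp only [smul_eq_mul, hp, hq]; field_simp; ring
    have h := hconcv.2 hm1mem hc1mem hp0 hq0 hpq
    rw [← hL] at h
    rw [hcomb] at h
    rw [hm2] at h
    have hLc1 : M ≤ L c1 := by
      rw [← hc1max]; exact lcm_ge a b M F hM c1 hc1mem
    rw [hm1Z] at h
    simp only [smul_eq_mul] at h
    have h2 : p * F m2 ≤ p * F m1 := mul_le_mul_of_nonneg_left hFm2le hp0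
    have h3 : q * M ≤ q * L c1 := mul_le_mul_of_nonneg_left hLc1 hq0
    have h4 : q * F m2 < q * M := mul_lt_mul_of_pos_left hFm2M hq0'
    have e : p * F m2 + q * F m2 = F m2 := by rw [← add_mul, hpq, one_mul]
    linarith
  exact ⟨ham1, hm1s⟩
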